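/- Let F ⊆ [0,1] be a set and δ ∈ (0,1). Suppose F requires N δ-boxes to be covered (N = N_δ(F) is the minimal covering number by intervals of length δ). Then there exists x ∈ [0,1] such that N_δ(F ∩ [0,x]) ≥ ⌊N/2⌋ and N_δ(F ∩ [x,1]) ≥ ⌊N/2⌋. -/
import Mathlib


open Set

/-- The minimal number of closed intervals of length `δ` needed to cover `A ⊆ ℝ`. -/
noncomputable def covByIntervals (A : Set ℝ) (δ : ℝ) : ℕ :=
  sInf {k : ℕ | ∃ t : Finset ℝ, t.card = k ∧ A ⊆ ⋃ a ∈ t, Set.Icc a (a + δ)}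

lemma cov_le {A : Set ℝ} {δ : ℝ} (t : Finset ℝ) (h : A ⊆ ⋃ a ∈ t, Set.Icc a (a + δ)) :
    covByIntervals A δ ≤ t.card :=
  Nat.sInf_le ⟨t, rfl, h⟩

lemma cov_setNonempty {A : Set ℝ} {δ : ℝ} (hA : A ⊆ Set.Icc (0:ℝ) 1) (hδ : 0 < δ) :
    {k : ℕ | ∃ t : Finset ℝ, t.card = k ∧ A ⊆ ⋃ a ∈ t, Set.Icc a (a + δ)}.Nonempty := by
  set n : ℕ := ⌊(1:ℝ)/δ⌋₊ + 1 with hn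
  refine ⟨((Finset.range n).image (fun i : ℕ => (i:ℝ)*δ)).card,
    (Finset.range n).image (fun i : ℕ => (i:ℝ)*δ), rfl, ?_⟩
  intro y hy
  obtain ⟨hy0, hy1⟩ := hA hy
  have hyd : 0 ≤ y / δ := div_nonneg hy0 hδ.le
  set i : ℕ := ⌊y/δ⌋₊ with hi
  have hin : i < n := by
    have : ⌊y/δ⌋₊ ≤ ⌊(1:ℝ)/δ⌋₊ := Nat.floor_le_floor (by gcongr)
    omega
  have h1 : (i:ℝ)*δ ≤ y := by
    have h := Nat.floor_le hyd
    calc (i:ℝ)*δ ≤ (y/δ)*δ := by gcongr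
      _ = y := div_mul_cancel₀ y hδ.ne'
  have h2 : y ≤ (i:ℝ)*δ + δ := by
    have h := (Nat.lt_floor_add_one (y/δ)).le
    have : y / δ * δ ≤ ((i:ℝ)+1) * δ := by gcongr
    rw [div_mul_cancel₀ y hδ.ne'] at this
    linarith
  simp only [Finset.mem_image, Set.mem_iUnion]
  exact ⟨(i:ℝ)*δ, ⟨i, Finset.mem_range.mpr hin, rfl⟩, h1, h2⟩

lemma cov_exists {A : Set ℝ} {δ : ℝ} (hA : A ⊆ Set.Icc (0:ℝ) 1) (hδ : 0 < δ) :
    ∃ t : Finset ℝ, t.card = covByIntervals A δ ∧ A ⊆ ⋃ a ∈ t, Set.Icc a (a + δ) :=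
  Nat.sInf_mem (cov_setNonempty hA hδ)

lemma cov_mono {A B : Set ℝ} {δ : ℝ} (hAB : A ⊆ B) (hB : B ⊆ Set.Icc (0:ℝ) 1)
    (hδ : 0 < δ) : covByIntervals A δ ≤ covByIntervals B δ := by
  obtain ⟨t, ht, hcov⟩ := cov_exists hB hδ
  calc covByIntervals A δ ≤ t.card := cov_le t (hAB.trans hcov)
    _ = _ := ht

lemma cov_subadd {A B : Set ℝ} {δ : ℝ} (hA : A ⊆ Set.Icc (0:ℝ) 1)
    (hB : B ⊆ Set.Icc (0:ℝ) 1) (hδ : 0 < δ) :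
    covByIntervals (A ∪ B) δ ≤ covByIntervals A δ + covByIntervals B δ := by
  obtain ⟨t, ht, hcov⟩ := cov_exists hA hδ
  obtain ⟨s, hs, hcov'⟩ := cov_exists hB hδ
  have : A ∪ B ⊆ ⋃ a ∈ (t ∪ s), Set.Icc a (a + δ) := by
    rintro z (hz | hz)
    · obtain ⟨u, hu, hmem⟩ := Set.mem_iUnion₂.mp (hcov hz)
      exact Set.mem_iUnion₂.mpr ⟨u, Finset.mem_union_left _ hu, hmem⟩
    · obtain ⟨u, hu, hmem⟩ := Set.mem_iUnion₂.mp (hcov' hz)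
      exact Set.mem_iUnion₂.mpr ⟨u, Finset.mem_union_right _ hu, hmem⟩
  calc covByIntervals (A ∪ B) δ ≤ (t ∪ s).card := cov_le _ this
    _ ≤ t.card + s.card := Finset.card_union_le t s
    _ = _ := by rw [ht, hs]

lemma cov_one {A : Set ℝ} {δ y : ℝ} (h : A ⊆ Set.Icc y (y + δ)) :
    covByIntervals A δ ≤ 1 := by
  have := cov_le ({y} : Finset ℝ) (by simpa using h)
  simpa using this

lemma step_right {F : Set ℝ} (hF : F ⊆ Set.Icc (0:ℝ) 1) {δ y z : ℝ} (hδ : 0 < δ)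
    (hyz : y ≤ z) (hzy : z ≤ y + δ) :
    covByIntervals (F ∩ Set.Icc y 1) δ ≤ covByIntervals (F ∩ Set.Icc z 1) δ + 1 := by
  have hsub : F ∩ Set.Icc y 1 ⊆ (F ∩ Set.Icc z 1) ∪ (F ∩ Set.Icc y z) := by
    rintro w ⟨hw, hw1, hw2⟩
    rcases le_total z w with h | h
    · exact Or.inl ⟨hw, h, hw2⟩
    · exact Or.inr ⟨hw, hw1, h⟩
  have h1 : covByIntervals (F ∩ Set.Icc y z) δ ≤ 1 :=
    cov_one (fun w hw => ⟨hw.2.1, le_trans hw.2.2 hzy⟩)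
  have h2 := cov_mono hsub (Set.union_subset (Set.inter_subset_left.trans hF)
      (Set.inter_subset_left.trans hF)) hδ
  have h3 := cov_subadd (A := F ∩ Set.Icc z 1) (B := F ∩ Set.Icc y z)
      (Set.inter_subset_left.trans hF) (Set.inter_subset_left.trans hF) hδ
  omega

theorem exists_split_covering (F : Set ℝ) (hF : F ⊆ Set.Icc (0:ℝ) 1)
    (δ : ℝ) (hδ : δ ∈ Set.Ioo (0:ℝ) 1) :
    ∃ x ∈ Set.Icc (0:ℝ) 1,
      covByIntervals F δ / 2 ≤ covByIntervals (F ∩ Set.Icc 0 x) δ ∧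
      covByIntervals F δ / 2 ≤ covByIntervals (F ∩ Set.Icc x 1) δ := by
  obtain ⟨hδ0, hδ1⟩ := hδ
  set N := covByIntervals F δ with hN
  set m := N / 2 with hm
  have hmN : 2 * m ≤ N := by omega
  by_cases hm0 : m = 0
  · exact ⟨0, ⟨le_refl 0, zero_le_one⟩, by omega, by omega⟩
  have key : ∀ x : ℝ, N ≤ covByIntervals (F ∩ Set.Icc 0 x) δ +
      covByIntervals (F ∩ Set.Icc x 1) δ := by
    intro x
    have hsub : F ⊆ (F ∩ Set.Icc 0 x) ∪ (F ∩ Set.Icc x 1) := by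
      intro w hw
      rcases le_total w x with h | h
      · exact Or.inl ⟨hw, (hF hw).1, h⟩
      · exact Or.inr ⟨hw, h, (hF hw).2⟩
    have h2 := cov_mono hsub (Set.union_subset (Set.inter_subset_left.trans hF)
        (Set.inter_subset_left.trans hF)) hδ0
    have h3 := cov_subadd (A := F ∩ Set.Icc 0 x) (B := F ∩ Set.Icc x 1)
        (Set.inter_subset_left.trans hF) (Set.inter_subset_left.trans hF) hδ0
    omega
  have hF1 : F ∩ Set.Icc (0:ℝ) 1 = F := Set.inter_eq_self_of_subset_left hF
  set S := {x : ℝ | x ∈ Set.Icc (0:ℝ) 1 ∧ m ≤ covByIntervals (F ∩ Set.Icc 0 x) δ} with hS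
  have h1S : (1:ℝ) ∈ S := ⟨⟨zero_le_one, le_refl 1⟩, by rw [hF1]; exact Nat.div_le_self _ _⟩
  have hSne : S.Nonempty := ⟨1, h1S⟩
  have hbd : BddBelow S := ⟨0, fun x hx => hx.1.1⟩
  set c := sInf S with hc
  have hc0 : 0 ≤ c := le_csInf hSne fun x hx => hx.1.1
  have hc1 : c ≤ 1 := csInf_le hbd h1S
  by_cases hcase : m ≤ covByIntervals (F ∩ Set.Icc 0 c) δ
  · refine ⟨c, ⟨hc0, hc1⟩, hcase, ?_⟩
    rcases eq_or_lt_of_le hc0 with h0 | h0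
    · rw [← h0, hF1]
      exact Nat.div_le_self _ _
    · set y := c - min δ c with hy
      have hymin : 0 < min δ c := lt_min hδ0 h0
      have hy0 : 0 ≤ y := by simp only [hy]; cases min_cases δ c <;> linarith [min_le_right δ c]
      have hyc : y < c := by simp only [hy]; linarith
      have hynS : y ∉ S := fun h => absurd (csInf_le hbd h) (not_le.mpr hyc)
      have hfy : ¬ m ≤ covByIntervals (F ∩ Set.Icc 0 y) δ := by
        intro h; exact hynS ⟨⟨hy0, by linarith⟩, h⟩
      have hkey := key y
      have hstep := step_right hF hδ0 hyc.le
        (show c ≤ y + δ by simp only [hy]; cases min_cases δ c <;> linarith [min_le_left δ c])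
      omega
  · obtain ⟨x, hxS, hxlt⟩ := exists_lt_of_csInf_lt hSne
      (show sInf S < c + δ by rw [← hc]; linarith)
    have hcx : c ≤ x := csInf_le hbd hxS
    refine ⟨x, hxS.1, hxS.2, ?_⟩
    have hstep := step_right hF hδ0 hcx hxlt.le
    have hkey := key c
    omega
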